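/- Let A₊, A₋ ∈ ℝ² be distinct points with ‖A₊‖ = ‖A₋‖ = 1, and define U₀(p) = log(‖p − A₊‖² / ‖p − A₋‖²). Then for every z ∈ ℝ² with ‖z‖ = 1 and z ∉ {A₊, A₋}, the directional derivative of U₀ at z in the direction z equals 0. That is, U₀ satisfies the homogeneous Neumann boundary condition ∂U₀/∂n = 0 on the unit circle away from the two electrode points. -/

import Mathlib

open scoped RealInnerProductSpace

lemma aux_hasFDerivAt_log_norm_sq (A z : EuclideanSpace ℝ (Fin 2)) (hzA : z ≠ A) :
    HasFDerivAt (fun p : EuclideanSpace ℝ (Fin 2) => Real.log (‖p - A‖ ^ 2))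
      ((‖z - A‖ ^ 2)⁻¹ • (2 • (innerSL ℝ (z - A)).comp
        (ContinuousLinearMap.id ℝ (EuclideanSpace ℝ (Fin 2))))) z := by
  have hne : ‖z - A‖ ^ 2 ≠ 0 := by
    simpa [sub_eq_zero] using hzA
  have h1 : HasFDerivAt (fun p : EuclideanSpace ℝ (Fin 2) => ‖p - A‖ ^ 2)
      (2 • (innerSL ℝ (z - A)).comp (ContinuousLinearMap.id ℝ (EuclideanSpace ℝ (Fin 2)))) z :=
    ((hasFDerivAt_id z).sub_const A).norm_sq
  exact h1.log hne

lemma aux_value (A z : EuclideanSpace ℝ (Fin 2)) (hA : ‖A‖ = 1) (hz : ‖z‖ = 1)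
    (hzA : z ≠ A) :
    (‖z - A‖ ^ 2)⁻¹ * (2 * ⟪z - A, z⟫) = 1 := by
  have hne : ‖z - A‖ ^ 2 ≠ 0 := by simpa [sub_eq_zero] using hzA
  have h1 : ‖z - A‖ ^ 2 = 2 - 2 * ⟪z, A⟫ := by
    rw [@norm_sub_sq_real, hA, hz]; ring
  have h2 : ⟪z - A, z⟫ = 1 - ⟪z, A⟫ := by
    rw [inner_sub_left, real_inner_self_eq_norm_sq, hz, real_inner_comm]; ring
  rw [h2, h1]
  have hne2 : 2 - 2 * ⟪z, A⟫ ≠ 0 := by rw [h1] at hne; exact hne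
  rw [inv_mul_eq_div, div_eq_one_iff_eq hne2]
  ring

/-- For distinct unit points `A₊, A₋` on the unit circle, the
background potential `U₀(p) = log (‖p - A₊‖² / ‖p - A₋‖²)` has vanishing outward
normal derivative on the unit circle away from the electrodes: for every `z` with
`‖z‖ = 1`, `z ≠ A₊`, `z ≠ A₋`, the directional derivative of `U₀` at `z` in the
direction `z` equals `0`. -/
theorem stmt_3 (Ap Am : EuclideanSpace ℝ (Fin 2)) (hA : Ap ≠ Am)
    (hAp : ‖Ap‖ = 1) (hAm : ‖Am‖ = 1)
    (z : EuclideanSpace ℝ (Fin 2)) (hz : ‖z‖ = 1) (hzp : z ≠ Ap) (hzm : z ≠ Am) :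
    lineDeriv ℝ
      (fun p : EuclideanSpace ℝ (Fin 2) =>
        Real.log (‖p - Ap‖ ^ 2 / ‖p - Am‖ ^ 2)) z z = 0 := by
  set Lp := (‖z - Ap‖ ^ 2)⁻¹ • (2 • (innerSL ℝ (z - Ap)).comp
    (ContinuousLinearMap.id ℝ (EuclideanSpace ℝ (Fin 2)))) with hLp
  set Lm := (‖z - Am‖ ^ 2)⁻¹ • (2 • (innerSL ℝ (z - Am)).comp
    (ContinuousLinearMap.id ℝ (EuclideanSpace ℝ (Fin 2)))) with hLm
  have hg : HasFDerivAt
      (fun p : EuclideanSpace ℝ (Fin 2) =>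
        Real.log (‖p - Ap‖ ^ 2) - Real.log (‖p - Am‖ ^ 2)) (Lp - Lm) z :=
    (aux_hasFDerivAt_log_norm_sq Ap z hzp).sub (aux_hasFDerivAt_log_norm_sq Am z hzm)
  have heq : (fun p : EuclideanSpace ℝ (Fin 2) =>
        Real.log (‖p - Ap‖ ^ 2 / ‖p - Am‖ ^ 2)) =ᶠ[nhds z]
      (fun p : EuclideanSpace ℝ (Fin 2) =>
        Real.log (‖p - Ap‖ ^ 2) - Real.log (‖p - Am‖ ^ 2)) := by
    have hopen : IsOpen {p : EuclideanSpace ℝ (Fin 2) | p ≠ Ap ∧ p ≠ Am} :=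
      (isOpen_compl_singleton.inter isOpen_compl_singleton)
    filter_upwards [hopen.mem_nhds ⟨hzp, hzm⟩] with p hp
    rw [Real.log_div (by simpa [sub_eq_zero] using hp.1) (by simpa [sub_eq_zero] using hp.2)]
  have hf : HasFDerivAt
      (fun p : EuclideanSpace ℝ (Fin 2) =>
        Real.log (‖p - Ap‖ ^ 2 / ‖p - Am‖ ^ 2)) (Lp - Lm) z :=
    hg.congr_of_eventuallyEq heq
  have := (hf.hasLineDerivAt z).lineDeriv
  rw [this]
  have : (Lp - Lm) z = (‖z - Ap‖ ^ 2)⁻¹ * (2 * ⟪z - Ap, z⟫)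
      - (‖z - Am‖ ^ 2)⁻¹ * (2 * ⟪z - Am, z⟫) := by
    simp [hLp, hLm]; rw [inner_sub_left, inner_sub_left, real_inner_self_eq_norm_sq]
  rw [this, aux_value Ap z hAp hz hzp, aux_value Am z hAm hz hzm, sub_self]
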